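/- Every subset of the natural numbers that is denser than lacunaries is not an I₀ set. -/

import Mathlib

set_option maxHeartbeats 2000000

/-- A sequence `ψ : ℕ → ℂ` is almost periodic if it is a uniform limit of
trigonometric polynomials. -/
def AlmostPeriodic (ψ : ℕ → ℂ) : Prop :=
  ∀ ε : ℝ, 0 < ε → ∃ (m : ℕ) (c : Fin m → ℂ) (α : Fin m → ℝ),
    ∀ n : ℕ, ‖ψ n - ∑ j, c j * Complex.exp (2 * (Real.pi : ℂ) * Complex.I * (n : ℂ) * (α j : ℂ))‖ < ε

/-- A set `E ⊆ ℕ` is an `I₀` set if every bounded function on `E` extends to an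
almost periodic sequence on `ℕ`. -/
def IsI0Set (E : Set ℕ) : Prop :=
  ∀ b : ℕ → ℂ, (∃ C : ℝ, ∀ n ∈ E, ‖b n‖ ≤ C) →
    ∃ ψ : ℕ → ℂ, AlmostPeriodic ψ ∧ ∀ r ∈ E, ψ r = b r

/-- A strictly increasing sequence of positive integers is lacunary if
`inf_n s (n+1) / s n > 1`. -/
def Lacunary (s : ℕ → ℕ) : Prop :=
  StrictMono s ∧ (∀ n, 0 < s n) ∧ ∃ q : ℝ, 1 < q ∧ ∀ n, q * (s n : ℝ) ≤ (s (n + 1) : ℝ)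

/-- A strictly increasing sequence `r` is denser than lacunaries if
`r n / s n → 0` for every lacunary sequence `s`. -/
def DenserThanLacunaries (r : ℕ → ℕ) : Prop :=
  StrictMono r ∧ ∀ s : ℕ → ℕ, Lacunary s →
    Filter.Tendsto (fun n => (r n : ℝ) / (s n : ℝ)) Filter.atTop (nhds 0)

open Filter Real Finset

noncomputable def sg (b : Bool) : ℝ := if b then 1 else -1

noncomputable def ec (k : ℕ) (t : ℝ) : ℂ :=
  Complex.exp (2 * (Real.pi : ℂ) * Complex.I * (k : ℂ) * (t : ℂ))


lemma sg_abs (b : Bool) : |sg b| = 1 := by cases b <;> simp [sg]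

lemma sgC_cases (v : Bool) : ((sg v : ℝ) : ℂ) = 1 ∨ ((sg v : ℝ) : ℂ) = -1 := by
  cases v <;> simp [sg]

lemma sgC_norm (v : Bool) : ‖((sg v : ℝ) : ℂ)‖ = 1 := by
  rw [Complex.norm_real]; cases v <;> simp [sg]

lemma re_lower (s z : ℂ) (hs : s = 1 ∨ s = -1) (h : ‖s - z‖ ≤ 1/2) : 1/2 ≤ (s * z).re := by
  have h1 : s * z = 1 + s * (z - s) := by
    rcases hs with h' | h' <;> rw [h'] <;> ring
  have h2 : ‖s * (z - s)‖ ≤ 1/2 := by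
    rw [norm_mul]
    have : ‖s‖ = 1 := by rcases hs with h' | h' <;> rw [h'] <;> simp
    rw [this, one_mul, norm_sub_rev]
    exact h
  have h3 : -(1/2 : ℝ) ≤ (s * (z - s)).re := by
    have := Complex.abs_re_le_norm (s * (z - s))
    have h4 := abs_le.1 (le_trans this h2)
    exact h4.1
  rw [h1, Complex.add_re, Complex.one_re]
  linarith


lemma factor_bound (lam x : ℝ) (hx : |x| ≤ 1) :
    Real.exp (lam * x) + Real.exp (-(lam * x)) ≤ 2 * Real.exp (lam ^ 2 / 2) := by
  have hcosh : Real.exp (lam * x) + Real.exp (-(lam * x)) = 2 * Real.cosh (lam * x) := by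
    rw [Real.cosh_eq]; ring
  rw [hcosh]
  have h1 : Real.cosh (lam * x) ≤ Real.exp ((lam * x) ^ 2 / 2) := Real.cosh_le_exp_half_sq _
  have h2 : (lam * x) ^ 2 ≤ lam ^ 2 := by
    have habs : |lam * x| ≤ |lam| := by
      rw [abs_mul]
      calc |lam| * |x| ≤ |lam| * 1 := mul_le_mul_of_nonneg_left hx (abs_nonneg _)
        _ = |lam| := mul_one _
    calc (lam * x) ^ 2 = |lam * x| ^ 2 := (sq_abs _).symm
      _ ≤ |lam| ^ 2 := by gcongr
      _ = lam ^ 2 := sq_abs _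
  have := Real.exp_le_exp.2 (div_le_div_of_nonneg_right h2 (by norm_num) : (lam*x)^2/2 ≤ lam^2/2)
  linarith [h1.trans this]

lemma chernoff_count (N : ℕ) (a : Fin N → ℝ) (ha : ∀ j, |a j| ≤ 1)
    (lam s : ℝ) (hlam : 0 ≤ lam) :
    ((Finset.univ : Finset (Fin N → Bool)).filter
        (fun b => s ≤ ∑ j, sg (b j) * a j)).card * Real.exp (lam * s)
      ≤ 2 ^ N * Real.exp (N * lam ^ 2 / 2) := by
  classical
  have key : ((Finset.univ : Finset (Fin N → Bool)).filter
        (fun b => s ≤ ∑ j, sg (b j) * a j)).card * Real.exp (lam * s)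
      ≤ ∑ b : Fin N → Bool, Real.exp (lam * ∑ j, sg (b j) * a j) := by
    rw [← nsmul_eq_mul, ← Finset.sum_const]
    refine le_trans (Finset.sum_le_sum ?_) (Finset.sum_le_sum_of_subset_of_nonneg
      (Finset.filter_subset _ _) (fun _ _ _ => (Real.exp_pos _).le))
    intro b hb
    rw [Finset.mem_filter] at hb
    exact Real.exp_le_exp.2 (mul_le_mul_of_nonneg_left hb.2 hlam)
  refine key.trans ?_
  have expand : ∀ b : Fin N → Bool, Real.exp (lam * ∑ j, sg (b j) * a j)
      = ∏ j, Real.exp (lam * (sg (b j) * a j)) := by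
    intro b
    rw [Finset.mul_sum, Real.exp_sum]
  simp only [expand]
  have hpi := Finset.prod_univ_sum (fun _ : Fin N => (Finset.univ : Finset Bool))
    (fun j v => Real.exp (lam * (sg v * a j)))
  rw [Fintype.piFinset_univ] at hpi
  rw [← hpi]
  calc ∏ j, ∑ v : Bool, Real.exp (lam * (sg v * a j))
      ≤ ∏ _j : Fin N, 2 * Real.exp (lam ^ 2 / 2) := by
        refine Finset.prod_le_prod (fun _ _ => Finset.sum_nonneg
          (fun _ _ => (Real.exp_pos _).le)) (fun j _ => ?_)
        have hbool : ∑ v : Bool, Real.exp (lam * (sg v * a j))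
            = Real.exp (lam * a j) + Real.exp (-(lam * a j)) := by
          rw [Fintype.sum_bool]
          simp [sg]

        rw [hbool]
        exact factor_bound lam (a j) (ha j)
    _ = 2 ^ N * Real.exp (N * lam ^ 2 / 2) := by
        rw [Finset.prod_const, Finset.card_univ, Fintype.card_fin, mul_pow,
          ← Real.exp_nat_mul]
        ring_nf

lemma ec_norm (k : ℕ) (t : ℝ) : ‖ec k t‖ = 1 := by
  rw [ec, Complex.norm_exp]
  norm_num [Complex.mul_re, Complex.mul_im]

lemma ec_re_abs (k : ℕ) (t : ℝ) : |(ec k t).re| ≤ 1 := by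
  have := Complex.abs_re_le_norm (ec k t)
  rw [ec_norm] at this
  exact this

lemma ec_im_abs (k : ℕ) (t : ℝ) : |(ec k t).im| ≤ 1 := by
  have := Complex.abs_im_le_norm (ec k t)
  rw [ec_norm] at this
  exact this

lemma ec_lip (k : ℕ) (t t' : ℝ) (h : 2 * Real.pi * k * |t - t'| ≤ 1) :
    ‖ec k t - ec k t'‖ ≤ 2 * (2 * Real.pi * k * |t - t'|) := by
  have hsplit : ec k t - ec k t' = ec k t' *
      (Complex.exp (2 * (Real.pi : ℂ) * Complex.I * (k : ℂ) * ((t : ℂ) - (t' : ℂ))) - 1) := by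
    rw [mul_sub, mul_one, ec, ec, ← Complex.exp_add]
    ring_nf
  have habs : ‖(2 * (Real.pi : ℂ) * Complex.I * (k : ℂ) * ((t : ℂ) - (t' : ℂ)))‖
      = 2 * Real.pi * k * |t - t'| := by
    rw [norm_mul, norm_mul, norm_mul, norm_mul]
    simp [Complex.norm_real, ← Complex.ofReal_sub, abs_of_nonneg Real.pi_pos.le]
  rw [hsplit, norm_mul, ec_norm, one_mul]
  have := Complex.norm_exp_sub_one_le (x := 2 * (Real.pi : ℂ) * Complex.I * (k : ℂ) * ((t : ℂ) - (t' : ℂ))) (by rw [habs]; exact h)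
  rw [habs] at this
  exact this

lemma chernoff_count' (N : ℕ) (a : Fin N → ℝ) (ha : ∀ j, |a j| ≤ 1)
    (lam s : ℝ) (hlam : 0 ≤ lam) :
    (((Finset.univ : Finset (Fin N → Bool)).filter
        (fun b => s ≤ ∑ j, sg (b j) * a j)).card : ℝ)
      ≤ 2 ^ N * Real.exp (N * lam ^ 2 / 2 - lam * s) := by
  have h := chernoff_count N a ha lam s hlam
  have hexp : (0:ℝ) < Real.exp (lam * s) := Real.exp_pos _
  have h2 : (((Finset.univ : Finset (Fin N → Bool)).filter
        (fun b => s ≤ ∑ j, sg (b j) * a j)).card : ℝ)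
      ≤ 2 ^ N * Real.exp (N * lam ^ 2 / 2) / Real.exp (lam * s) := by
    rw [le_div_iff₀ hexp]; exact h
  refine h2.trans (le_of_eq ?_)
  rw [Real.exp_sub]; ring

lemma pt_count (N : ℕ) (f : Fin N → ℕ) (t : ℝ) (s lam : ℝ) (hlam : 0 ≤ lam) :
    (((Finset.univ : Finset (Fin N → Bool)).filter
        (fun b => 2 * s ≤ ‖∑ j, (sg (b j) : ℂ) * ec (f j) t‖)).card : ℝ)
      ≤ 4 * (2 ^ N * Real.exp (N * lam ^ 2 / 2 - lam * s)) := by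
  classical
  set u : Fin N → ℝ := fun j => (ec (f j) t).re with hu
  set v : Fin N → ℝ := fun j => (ec (f j) t).im with hv
  have hre : ∀ b : Fin N → Bool, (∑ j, (sg (b j) : ℂ) * ec (f j) t).re
      = ∑ j, sg (b j) * u j := by
    intro b
    rw [Complex.re_sum]
    exact Finset.sum_congr rfl (fun j _ => by simp [Complex.mul_re, hu])
  have him : ∀ b : Fin N → Bool, (∑ j, (sg (b j) : ℂ) * ec (f j) t).im
      = ∑ j, sg (b j) * v j := by
    intro b
    rw [Complex.im_sum]
    exact Finset.sum_congr rfl (fun j _ => by simp [Complex.mul_im, hv])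
  set F : (Fin N → ℝ) → Finset (Fin N → Bool) := fun a =>
    (Finset.univ.filter (fun b => s ≤ ∑ j, sg (b j) * a j)) with hF
  have hsub : (Finset.univ.filter
      (fun b : Fin N → Bool => 2 * s ≤ ‖∑ j, (sg (b j) : ℂ) * ec (f j) t‖))
      ⊆ ((F u ∪ F (-u)) ∪ (F v ∪ F (-v))) := by
    intro b hb
    rw [Finset.mem_filter] at hb
    have hb2 := hb.2
    have hnorm : ‖∑ j, (sg (b j) : ℂ) * ec (f j) t‖
        ≤ |∑ j, sg (b j) * u j| + |∑ j, sg (b j) * v j| := by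
      rw [← hre b, ← him b]
      exact Complex.norm_le_abs_re_add_abs_im _
    have hcase : s ≤ |∑ j, sg (b j) * u j| ∨ s ≤ |∑ j, sg (b j) * v j| := by
      by_contra hcon
      push_neg at hcon
      linarith
    have hneg : ∀ a : Fin N → ℝ, (∑ j, sg (b j) * (-a) j) = -∑ j, sg (b j) * a j := by
      intro a; rw [← Finset.sum_neg_distrib]
      exact Finset.sum_congr rfl (fun j _ => by simp only [Pi.neg_apply]; ring)
    simp only [Finset.mem_union]
    rcases hcase with hc | hc
    · rcases abs_cases (∑ j, sg (b j) * u j) with ⟨he, _⟩ | ⟨he, _⟩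
      · exact Or.inl (Or.inl (Finset.mem_filter.2 ⟨Finset.mem_univ _, by rw [he] at hc; exact hc⟩))
      · refine Or.inl (Or.inr (Finset.mem_filter.2 ⟨Finset.mem_univ _, ?_⟩))
        rw [hneg u]; rw [he] at hc; linarith
    · rcases abs_cases (∑ j, sg (b j) * v j) with ⟨he, _⟩ | ⟨he, _⟩
      · exact Or.inr (Or.inl (Finset.mem_filter.2 ⟨Finset.mem_univ _, by rw [he] at hc; exact hc⟩))
      · refine Or.inr (Or.inr (Finset.mem_filter.2 ⟨Finset.mem_univ _, ?_⟩))
        rw [hneg v]; rw [he] at hc; linarith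
  have hcard := Finset.card_le_card hsub
  have hcard2 : ((F u ∪ F (-u)) ∪ (F v ∪ F (-v))).card
      ≤ (F u).card + (F (-u)).card + ((F v).card + (F (-v)).card) := by
    calc ((F u ∪ F (-u)) ∪ (F v ∪ F (-v))).card
        ≤ (F u ∪ F (-u)).card + (F v ∪ F (-v)).card := Finset.card_union_le _ _
      _ ≤ (F u).card + (F (-u)).card + ((F v).card + (F (-v)).card) := by
          gcongr <;> exact Finset.card_union_le _ _
  have habs : ∀ a : Fin N → ℝ, (∀ j, |a j| ≤ 1) →
      ((F a).card : ℝ) ≤ 2 ^ N * Real.exp (N * lam ^ 2 / 2 - lam * s) :=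
    fun a ha => chernoff_count' N a ha lam s hlam
  have h1 := habs u (fun j => ec_re_abs _ _)
  have h2 := habs (-u) (fun j => by rw [Pi.neg_apply, abs_neg]; exact ec_re_abs _ _)
  have h3 := habs v (fun j => ec_im_abs _ _)
  have h4 := habs (-v) (fun j => by rw [Pi.neg_apply, abs_neg]; exact ec_im_abs _ _)
  have : ((Finset.univ.filter
      (fun b : Fin N → Bool => 2 * s ≤ ‖∑ j, (sg (b j) : ℂ) * ec (f j) t‖)).card : ℝ)
      ≤ ((F u).card : ℝ) + (F (-u)).card + ((F v).card + (F (-v)).card) := by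
    exact_mod_cast le_trans (Nat.cast_le.2 hcard) (Nat.cast_le.2 hcard2)
  linarith

lemma flat_exists (N D T : ℕ) (f : Fin N → ℕ) (hf : ∀ j, f j ≤ D) (hD : 1 ≤ D)
    (θ : ℝ) (hθ0 : 0 < θ) (hθ1 : θ ≤ 1) (hT : 64 * (D : ℝ) ≤ θ * T)
    (hmain : (T : ℝ) * (4 * Real.exp (-θ ^ 2 * N / 128)) < 1) :
    ∃ b : Fin N → Bool, ∀ t ∈ Set.Icc (0 : ℝ) 1,
      ‖∑ j, (sg (b j) : ℂ) * ec (f j) t‖ ≤ θ * N / 2 := by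
  classical
  have hD1 : (1 : ℝ) ≤ (D : ℝ) := by exact_mod_cast hD
  have hT0 : (0 : ℝ) ≤ (T : ℝ) := Nat.cast_nonneg _
  have hTpos : 0 < (T : ℝ) := by nlinarith [mul_nonneg (sub_nonneg.2 hθ1) hT0]
  have hDT : (D : ℝ) / T ≤ θ / 64 := by
    rw [div_le_div_iff₀ hTpos (by norm_num)]
    nlinarith
  set g : (Fin N → Bool) → ℝ → ℂ := fun b t => ∑ j, (sg (b j) : ℂ) * ec (f j) t with hg
  set Bad : Finset (Fin N → Bool) := Finset.univ.filter
    (fun b => ∃ k ∈ Finset.range T, θ * N / 4 ≤ ‖g b ((k : ℝ) / T)‖) with hBad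
  have hcardBad : (Bad.card : ℝ) < 2 ^ N := by
    have hsub : Bad ⊆ (Finset.range T).biUnion (fun k =>
        Finset.univ.filter (fun b => 2 * (θ * N / 8) ≤ ‖g b ((k : ℝ) / T)‖)) := by
      intro b hb
      rw [hBad, Finset.mem_filter] at hb
      obtain ⟨k, hk, hge⟩ := hb.2
      refine Finset.mem_biUnion.2 ⟨k, hk, Finset.mem_filter.2 ⟨Finset.mem_univ _, ?_⟩⟩
      linarith
    have h1 : (Bad.card : ℕ) ≤ ∑ k ∈ Finset.range T,
        (Finset.univ.filter (fun b => 2 * (θ * N / 8) ≤ ‖g b ((k : ℝ) / T)‖)).card :=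
      le_trans (Finset.card_le_card hsub) (Finset.card_biUnion_le)
    have h2 : ∀ k : ℕ, ((Finset.univ.filter
        (fun b : Fin N → Bool => 2 * (θ * N / 8) ≤ ‖g b ((k : ℝ) / T)‖)).card : ℝ)
        ≤ 4 * (2 ^ N * Real.exp (-θ ^ 2 * N / 128)) := by
      intro k
      have := pt_count N f ((k : ℝ) / T) (θ * N / 8) (θ / 8) (by positivity)
      have heq : (N : ℝ) * (θ / 8) ^ 2 / 2 - θ / 8 * (θ * N / 8) = -θ ^ 2 * N / 128 := by
        ring
      rw [heq] at this
      exact this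
    have h3 : ((Bad.card : ℝ)) ≤ (T : ℝ) * (4 * (2 ^ N * Real.exp (-θ ^ 2 * N / 128))) := by
      calc ((Bad.card : ℝ)) ≤ ∑ k ∈ Finset.range T, ((Finset.univ.filter
            (fun b : Fin N → Bool => 2 * (θ * N / 8) ≤ ‖g b ((k : ℝ) / T)‖)).card : ℝ) := by
            exact_mod_cast h1
        _ ≤ ∑ _k ∈ Finset.range T, 4 * (2 ^ N * Real.exp (-θ ^ 2 * N / 128)) :=
            Finset.sum_le_sum (fun k _ => h2 k)
        _ = (T : ℝ) * (4 * (2 ^ N * Real.exp (-θ ^ 2 * N / 128))) := by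
            rw [Finset.sum_const, Finset.card_range, nsmul_eq_mul]
    have h4 : (T : ℝ) * (4 * (2 ^ N * Real.exp (-θ ^ 2 * N / 128))) < 2 ^ N := by
      have hp : (0:ℝ) < 2 ^ N := by positivity
      nlinarith [hmain, Real.exp_pos (-θ ^ 2 * N / 128)]
    linarith
  have hex : ∃ b : Fin N → Bool, b ∉ Bad := by
    by_contra hcon
    push_neg at hcon
    have : (Finset.univ : Finset (Fin N → Bool)) ⊆ Bad := fun b _ => hcon b
    have hcard := Finset.card_le_card this
    rw [Finset.card_univ, Fintype.card_fun, Fintype.card_fin, Fintype.card_bool] at hcard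
    have : ((2 ^ N : ℕ) : ℝ) ≤ (Bad.card : ℝ) := Nat.cast_le.2 hcard
    push_cast at this
    linarith
  obtain ⟨b, hbgood⟩ := hex
  refine ⟨b, fun t ht => ?_⟩
  obtain ⟨ht0, ht1⟩ := ht
  have hgoodk : ∀ k ∈ Finset.range T, ‖g b ((k : ℝ) / T)‖ < θ * N / 4 := by
    intro k hk
    by_contra hcon
    push_neg at hcon
    exact hbgood (Finset.mem_filter.2 ⟨Finset.mem_univ _, ⟨k, hk, hcon⟩⟩)
  -- choose net point
  have hTnat : 1 ≤ T := by exact_mod_cast Nat.one_le_cast.2 (by exact_mod_cast Nat.cast_pos.1 hTpos)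
  set k : ℕ := min (Nat.floor (t * T)) (T - 1) with hk
  have hkmem : k ∈ Finset.range T := by
    rw [Finset.mem_range, hk]
    exact lt_of_le_of_lt (min_le_right _ _) (Nat.sub_lt (Nat.cast_pos.1 hTpos) one_pos)
  have hdist : |t - (k : ℝ) / T| ≤ 1 / T := by
    rcases le_or_gt (Nat.floor (t * T)) (T - 1) with hle | hgt
    · have hkeq : k = Nat.floor (t * T) := min_eq_left hle
      have hfl : ((Nat.floor (t * T) : ℝ)) ≤ t * T := Nat.floor_le (by positivity)
      have hfu : t * T < (Nat.floor (t * T) : ℝ) + 1 := Nat.lt_floor_add_one _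
      rw [hkeq]
      have e1 : t - ((Nat.floor (t * T) : ℝ)) / T = (t * T - (Nat.floor (t * T) : ℝ)) / T := by
        field_simp
      rw [e1, abs_div, abs_of_pos hTpos]
      gcongr
      rw [abs_le]
      constructor <;> linarith
    · have hfl2 : (T : ℝ) ≤ t * T := by
        have h1 : T ≤ Nat.floor (t * T) := by omega
        have := (Nat.le_floor_iff (by positivity : (0:ℝ) ≤ t * T)).1 h1
        exact_mod_cast this
      have ht1' : t = 1 := by nlinarith
      have hkeq : k = T - 1 := min_eq_right (by omega)
      have hcast : ((T - 1 : ℕ) : ℝ) = (T : ℝ) - 1 := by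
        rw [Nat.cast_sub hTnat]; simp
      have : t - (k : ℝ) / T = 1 / T := by
        rw [hkeq, hcast, ht1']
        field_simp
        ring
      rw [this, abs_of_pos (by positivity)]
  -- Lipschitz estimate
  have hlipsum : ‖g b t - g b ((k : ℝ) / T)‖ ≤ (N : ℝ) * (θ / 4) := by
    have hdiff : g b t - g b ((k : ℝ) / T)
        = ∑ j, (sg (b j) : ℂ) * (ec (f j) t - ec (f j) ((k : ℝ) / T)) := by
      rw [hg, ← Finset.sum_sub_distrib]
      exact Finset.sum_congr rfl (fun j _ => by ring)
    rw [hdiff]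
    refine le_trans (norm_sum_le _ _) ?_
    have hterm : ∀ j : Fin N, ‖(sg (b j) : ℂ) * (ec (f j) t - ec (f j) ((k : ℝ) / T))‖
        ≤ θ / 4 := by
      intro j
      rw [norm_mul]
      have hsg : ‖((sg (b j) : ℝ) : ℂ)‖ = 1 := by
        rw [Complex.norm_real]
        cases b j <;> simp [sg]
      rw [hsg, one_mul]
      have hfj : (f j : ℝ) ≤ D := by exact_mod_cast hf j
      have hpi4 : Real.pi ≤ 4 := by linarith [Real.pi_le_four]
      have hineq : 2 * Real.pi * (f j) * |t - (k : ℝ) / T| ≤ θ / 8 := by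
        have h8 : 2 * Real.pi * (f j) * |t - (k : ℝ) / T| ≤ 8 * D * (1 / T) := by
          have h0 : (0:ℝ) ≤ |t - (k : ℝ) / T| := abs_nonneg _
          have hfj0 : (0:ℝ) ≤ (f j : ℝ) := Nat.cast_nonneg _
          have hp : 2 * Real.pi * (f j) ≤ 8 * D := by nlinarith [Real.pi_pos]
          calc 2 * Real.pi * (f j) * |t - (k : ℝ) / T| ≤ 8 * D * |t - (k : ℝ) / T| := by
                apply mul_le_mul_of_nonneg_right hp h0
            _ ≤ 8 * D * (1 / T) := by
                apply mul_le_mul_of_nonneg_left hdist (by positivity)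
        have h9 : 8 * (D : ℝ) * (1 / T) ≤ θ / 8 := by
          rw [mul_one_div, div_le_div_iff₀ hTpos (by norm_num : (0:ℝ) < 8)]
          nlinarith
        linarith
      have := ec_lip (f j) t ((k : ℝ) / T) (by linarith)
      linarith
    calc ∑ j, ‖(sg (b j) : ℂ) * (ec (f j) t - ec (f j) ((k : ℝ) / T))‖
        ≤ ∑ _j : Fin N, θ / 4 := Finset.sum_le_sum (fun j _ => hterm j)
      _ = (N : ℝ) * (θ / 4) := by rw [Finset.sum_const, Finset.card_univ,
            Fintype.card_fin, nsmul_eq_mul]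
  have hnet := hgoodk k hkmem
  have htri : ‖g b t‖ ≤ ‖g b ((k : ℝ) / T)‖ + ‖g b t - g b ((k : ℝ) / T)‖ := by
    calc ‖g b t‖ = ‖g b ((k : ℝ) / T) + (g b t - g b ((k : ℝ) / T))‖ := by ring_nf
      _ ≤ _ := norm_add_le _ _
  show ‖g b t‖ ≤ θ * N / 2
  have hN0 : (0:ℝ) ≤ (N:ℝ) := Nat.cast_nonneg _
  nlinarith

lemma growth_bound (r : ℕ → ℕ) (hr : DenserThanLacunaries r) (ρ : ℝ) (hρ : 1 < ρ) :
    ∃ A : ℝ, 1 ≤ A ∧ ∀ᶠ n in atTop, (r n : ℝ) ≤ A * ρ ^ n := by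
  set q : ℝ := (1 + ρ) / 2 with hq
  have hq1 : 1 < q := by rw [hq]; linarith
  have hqρ : q < ρ := by rw [hq]; linarith
  set s0 : ℕ := ⌈1 / (ρ - q)⌉₊ + 1 with hs0
  have hs01 : 1 ≤ s0 := by omega
  have hs0inv : 1 / (ρ - q) ≤ (s0 : ℝ) := by
    rw [hs0]
    push_cast
    linarith [Nat.le_ceil (1 / (ρ - q))]
  -- recursive sequence
  let s : ℕ → ℕ := fun n => Nat.rec (motive := fun _ => ℕ) s0 (fun _ prev => ⌈q * (prev : ℝ)⌉₊) n
  have hsucc : ∀ n, s (n + 1) = ⌈q * (s n : ℝ)⌉₊ := fun n => rfl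
  have hpos : ∀ n, s0 ≤ s n := by
    intro n
    induction n with
    | zero => exact le_refl _
    | succ n ih =>
      rw [hsucc]
      have h1 : (s n : ℝ) ≤ q * (s n : ℝ) := by
        nlinarith [(by exact_mod_cast lt_of_lt_of_le hs01 ih : (0:ℝ) < (s n : ℝ))]
      have := Nat.le_ceil (q * (s n : ℝ))
      have : (s n : ℝ) ≤ (⌈q * (s n : ℝ)⌉₊ : ℝ) := le_trans h1 this
      exact le_trans ih (by exact_mod_cast this)
  have hposn : ∀ n, 0 < s n := fun n => lt_of_lt_of_le hs01 (hpos n)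
  have hlow : ∀ n, q * (s n : ℝ) ≤ (s (n + 1) : ℝ) := by
    intro n
    rw [hsucc]
    exact Nat.le_ceil _
  have hmono : StrictMono s := by
    apply strictMono_nat_of_lt_succ
    intro n
    have h1 : (s n : ℝ) < q * (s n : ℝ) := by
      nlinarith [(by exact_mod_cast hposn n : (0:ℝ) < (s n : ℝ))]
    have : (s n : ℝ) < (s (n + 1) : ℝ) := lt_of_lt_of_le h1 (hlow n)
    exact_mod_cast this
  have hupper : ∀ n, (s (n + 1) : ℝ) ≤ ρ * (s n : ℝ) := by
    intro n
    rw [hsucc]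
    have hce : (⌈q * (s n : ℝ)⌉₊ : ℝ) < q * (s n : ℝ) + 1 :=
      Nat.ceil_lt_add_one (by positivity)
    have hsn : 1 / (ρ - q) ≤ (s n : ℝ) := le_trans hs0inv (by exact_mod_cast hpos n)
    have h1 : (1 : ℝ) ≤ (ρ - q) * (s n : ℝ) := by
      rw [div_le_iff₀ (by linarith : (0:ℝ) < ρ - q)] at hsn
      linarith
    linarith
  have hgeo : ∀ n, (s n : ℝ) ≤ (s0 : ℝ) * ρ ^ n := by
    intro n
    induction n with
    | zero => simp; exact_mod_cast le_refl s0
    | succ n ih =>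
      calc (s (n + 1) : ℝ) ≤ ρ * (s n : ℝ) := hupper n
        _ ≤ ρ * ((s0 : ℝ) * ρ ^ n) := by
            apply mul_le_mul_of_nonneg_left ih (by linarith)
        _ = (s0 : ℝ) * ρ ^ (n + 1) := by ring
  have hlac : Lacunary s := ⟨hmono, hposn, q, hq1, hlow⟩
  have htend := hr.2 s hlac
  have hev : ∀ᶠ n in atTop, (r n : ℝ) / (s n : ℝ) ≤ 1 := by
    have := htend.eventually (eventually_le_nhds (by norm_num : (0:ℝ) < 1))
    exact this
  refine ⟨s0, by exact_mod_cast hs01, ?_⟩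
  filter_upwards [hev] with n hn
  have hsn : (0 : ℝ) < (s n : ℝ) := by exact_mod_cast hposn n
  have : (r n : ℝ) ≤ (s n : ℝ) := by
    rw [div_le_one hsn] at hn
    exact hn
  exact le_trans this (hgeo n)

lemma log_growth (r : ℕ → ℕ) (hr : DenserThanLacunaries r) (ε : ℝ) (hε : 0 < ε) :
    ∀ᶠ n in atTop, (r n : ℝ) ≤ Real.exp (ε * n) := by
  obtain ⟨A, hA1, hev⟩ := growth_bound r hr (Real.exp (ε / 2)) (by
    rw [← Real.exp_zero]
    exact Real.exp_lt_exp.2 (by linarith))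
  have hev2 : ∀ᶠ n : ℕ in atTop, A ≤ Real.exp (ε / 2 * n) := by
    have htend : Tendsto (fun n : ℕ => ε / 2 * n) atTop atTop := by
      apply Tendsto.const_mul_atTop (by linarith)
      exact tendsto_natCast_atTop_atTop
    have := (Real.tendsto_exp_atTop.comp htend).eventually_ge_atTop A
    exact this
  filter_upwards [hev, hev2] with n h1 h2
  calc (r n : ℝ) ≤ A * Real.exp (ε / 2) ^ n := h1
    _ = A * Real.exp (ε / 2 * n) := by rw [← Real.exp_nat_mul]; ring_nf
    _ ≤ Real.exp (ε / 2 * n) * Real.exp (ε / 2 * n) := by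
        apply mul_le_mul_of_nonneg_right h2 (Real.exp_pos _).le
    _ = Real.exp (ε * n) := by rw [← Real.exp_add]; ring_nf

lemma ec_cont (k : ℕ) : Continuous (ec k) := by
  unfold ec
  continuity

/-- The approximation sets. -/
def BSet (r : ℕ → ℕ) (m : ℕ) : Set (ℕ → Bool) :=
  {b | ∃ c : Fin m → ℂ, ∃ α : Fin m → ℝ, (∀ j, ‖c j‖ ≤ m) ∧ (∀ j, α j ∈ Set.Icc (0:ℝ) 1) ∧
    ∀ n, ‖((sg (b n) : ℝ) : ℂ) - ∑ j, c j * ec (r n) (α j)‖ ≤ 1/2}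

lemma BSet_closed (r : ℕ → ℕ) (m : ℕ) : IsClosed (BSet r m) := by
  classical
  set S : Set ((Fin m → ℂ) × (Fin m → ℝ)) :=
    (Set.univ.pi fun _ => Metric.closedBall (0:ℂ) m) ×ˢ (Set.univ.pi fun _ => Set.Icc (0:ℝ) 1)
    with hS
  have hScompact : IsCompact S := by
    apply IsCompact.prod
    · exact isCompact_univ_pi (fun _ => isCompact_closedBall _ _)
    · exact isCompact_univ_pi (fun _ => isCompact_Icc)
  haveI : CompactSpace S := isCompact_iff_compactSpace.mp hScompact
  set C : Set (S × (ℕ → Bool)) :=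
    {p | ∀ n, ‖((sg (p.2 n) : ℝ) : ℂ) - ∑ j, (p.1 : (Fin m → ℂ) × (Fin m → ℝ)).1 j *
      ec (r n) ((p.1 : (Fin m → ℂ) × (Fin m → ℝ)).2 j)‖ ≤ 1/2} with hC
  have hCclosed : IsClosed C := by
    have : C = ⋂ n, {p : S × (ℕ → Bool) |
        ‖((sg (p.2 n) : ℝ) : ℂ) - ∑ j, (p.1 : (Fin m → ℂ) × (Fin m → ℝ)).1 j *
        ec (r n) ((p.1 : (Fin m → ℂ) × (Fin m → ℝ)).2 j)‖ ≤ 1/2} := by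
      ext p; simp [hC, Set.mem_iInter]
    rw [this]
    refine isClosed_iInter (fun n => ?_)
    have hcont : Continuous (fun p : S × (ℕ → Bool) =>
        ‖((sg (p.2 n) : ℝ) : ℂ) - ∑ j, (p.1 : (Fin m → ℂ) × (Fin m → ℝ)).1 j *
        ec (r n) ((p.1 : (Fin m → ℂ) × (Fin m → ℝ)).2 j)‖) := by
      apply Continuous.norm
      apply Continuous.sub
      · exact (continuous_of_discreteTopology
            (f := fun v : Bool => ((sg v : ℝ) : ℂ))).comp
          ((continuous_apply n).comp continuous_snd)
      · apply continuous_finset_sum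
        intro j _
        apply Continuous.mul
        · exact (continuous_apply j).comp
            (continuous_fst.comp (continuous_subtype_val.comp continuous_fst))
        · exact (ec_cont (r n)).comp ((continuous_apply j).comp
            (continuous_snd.comp (continuous_subtype_val.comp continuous_fst)))
    exact IsClosed.preimage hcont isClosed_Iic
  have himg : BSet r m = Prod.snd '' C := by
    ext b
    constructor
    · rintro ⟨c, α, hc, hα, hb⟩
      have hmem : (c, α) ∈ S := by
        constructor
        · intro j _
          simpa [Metric.mem_closedBall, dist_eq_norm] using hc j
        · intro j _
          exact hα j
      exact ⟨(⟨(c, α), hmem⟩, b), hb, rfl⟩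
    · rintro ⟨⟨⟨⟨c, α⟩, hmem⟩, b'⟩, hp, rfl⟩
      refine ⟨c, α, ?_, ?_, hp⟩
      · intro j
        have := hmem.1 j (Set.mem_univ j)
        simpa [Metric.mem_closedBall, dist_eq_norm] using this
      · intro j
        exact hmem.2 j (Set.mem_univ j)
  rw [himg]
  exact isClosedMap_snd_of_compactSpace _ hCclosed

lemma baire_step (r : ℕ → ℕ) (hcover : ⋃ m, BSet r m = Set.univ) :
    ∃ (M : ℕ) (b₀ : ℕ → Bool) (K : ℕ),
      ∀ b : ℕ → Bool, (∀ i < K, b i = b₀ i) → b ∈ BSet r M := by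
  have hbaire := nonempty_interior_of_iUnion_of_closed
    (f := fun m => BSet r m) (fun m => BSet_closed r m) hcover
  obtain ⟨M, b₀, hb₀⟩ := hbaire
  have hnhds : BSet r M ∈ nhds b₀ :=
    mem_nhds_iff.2 ⟨interior (BSet r M), interior_subset, isOpen_interior, hb₀⟩
  rw [nhds_pi, Filter.mem_pi] at hnhds
  obtain ⟨I, hIfin, t, ht, hsub⟩ := hnhds
  obtain ⟨K, hK⟩ := hIfin.bddAbove
  refine ⟨M, b₀, K + 1, fun b hb => ?_⟩
  apply hsub
  intro i hi
  have : b i = b₀ i := hb i (Nat.lt_succ_of_le (hK hi))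
  rw [this]
  exact mem_of_mem_nhds (ht i)

lemma ec_fract (k : ℕ) (a : ℝ) : ec k (Int.fract a) = ec k a := by
  unfold ec
  have h1 : 2 * (Real.pi : ℂ) * Complex.I * (k : ℂ) * ((Int.fract a : ℝ) : ℂ)
      = 2 * (Real.pi : ℂ) * Complex.I * (k : ℂ) * (a : ℂ)
        + ((-(k * ⌊a⌋) : ℤ) : ℂ) * (2 * (Real.pi : ℂ) * Complex.I) := by
    rw [Int.fract]
    push_cast
    ring
  rw [h1, Complex.exp_add, Complex.exp_int_mul_two_pi_mul_I, mul_one]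

lemma cover (r : ℕ → ℕ) (hrmono : StrictMono r) (hI0 : IsI0Set (Set.range r)) :
    ⋃ m, BSet r m = Set.univ := by
  classical
  ext b
  simp only [Set.mem_iUnion, Set.mem_univ, iff_true]
  set bc : ℕ → ℂ := fun k => if h : ∃ n, r n = k then ((sg (b h.choose) : ℝ) : ℂ) else 0
    with hbc
  have hbound : ∃ C : ℝ, ∀ k ∈ Set.range r, ‖bc k‖ ≤ C := by
    refine ⟨1, fun k _ => ?_⟩
    simp only [hbc]
    split_ifs with h
    · rw [sgC_norm]
    · simp
  obtain ⟨ψ, hAP, hint⟩ := hI0 bc hbound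
  have hval : ∀ n, ψ (r n) = ((sg (b n) : ℝ) : ℂ) := by
    intro n
    have h1 := hint (r n) ⟨n, rfl⟩
    have hh : ∃ n', r n' = r n := ⟨n, rfl⟩
    rw [h1]
    simp only [hbc]
    rw [dif_pos hh]
    congr 3
    exact hrmono.injective hh.choose_spec
  obtain ⟨m₀, c, α, happrox⟩ := hAP (1/4) (by norm_num)
  set M : ℕ := m₀ + ⌈∑ j, ‖c j‖⌉₊ with hM
  set c' : Fin M → ℂ := fun j => if h : (j : ℕ) < m₀ then c ⟨j, h⟩ else 0 with hc'
  set α' : Fin M → ℝ := fun j => if h : (j : ℕ) < m₀ then Int.fract (α ⟨j, h⟩) else 0 with hα'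
  refine ⟨M, c', α', ?_, ?_, ?_⟩
  · intro j
    simp only [hc']
    split_ifs with h
    · have h1 : ‖c ⟨j, h⟩‖ ≤ ∑ i, ‖c i‖ :=
        Finset.single_le_sum (fun i _ => norm_nonneg _) (Finset.mem_univ _)
      have h2 : (∑ i, ‖c i‖) ≤ (⌈∑ i, ‖c i‖⌉₊ : ℝ) := Nat.le_ceil _
      have h3 : ((⌈∑ i, ‖c i‖⌉₊ : ℕ) : ℝ) ≤ (M : ℝ) := by
        rw [hM]; push_cast; linarith [(by positivity : (0:ℝ) ≤ (m₀:ℝ))]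
      linarith
    · simp
  · intro j
    simp only [hα']
    split_ifs with h
    · exact ⟨Int.fract_nonneg _, (Int.fract_lt_one _).le⟩
    · exact ⟨le_refl 0, by norm_num⟩
  · intro n
    have hsum : ∑ j, c' j * ec (r n) (α' j) = ∑ j, c j * ec (r n) (α j) := by
      set g : ℕ → ℂ := fun j => if h : j < m₀ then
        c ⟨j, h⟩ * ec (r n) (Int.fract (α ⟨j, h⟩)) else 0 with hg
      have e1 : ∑ j : Fin M, c' j * ec (r n) (α' j) = ∑ j ∈ Finset.range M, g j := by
        rw [← Fin.sum_univ_eq_sum_range]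
        refine Finset.sum_congr rfl (fun j _ => ?_)
        simp only [hg, hc', hα']
        split_ifs with h
        · rfl
        · simp
      have e2 : ∑ j ∈ Finset.range m₀, g j = ∑ j ∈ Finset.range M, g j := by
        apply Finset.sum_subset (Finset.range_subset_range.2 (Nat.le_add_right _ _))
        intro x _ hx
        rw [Finset.mem_range] at hx
        simp only [hg]
        exact dif_neg (by omega)
      have e3 : ∑ j ∈ Finset.range m₀, g j = ∑ j : Fin m₀, c j * ec (r n) (α j) := by
        rw [← Fin.sum_univ_eq_sum_range]
        refine Finset.sum_congr rfl (fun j _ => ?_)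
        simp only [hg]
        rw [dif_pos j.isLt]
        rw [ec_fract]
      rw [e1, ← e2, e3]
    rw [hsum]
    have h1 := happrox (r n)
    rw [hval n] at h1
    have : (fun j => c j * Complex.exp (2 * (Real.pi : ℂ) * Complex.I * ((r n : ℕ) : ℂ) * ((α j : ℝ) : ℂ)))
        = fun j => c j * ec (r n) (α j) := rfl
    have h2 : ‖((sg (b n) : ℝ) : ℂ) - ∑ j, c j * ec (r n) (α j)‖ < 1/4 := h1
    linarith

/-- Sets that are denser than lacunaries are not `I₀`. -/
theorem denser_than_lacunaries_not_I0 (r : ℕ → ℕ) (hr : DenserThanLacunaries r) :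
    ¬ IsI0Set (Set.range r) := by
  intro hI0
  classical
  obtain ⟨M, b₀, K, hcyl⟩ := baire_step r (cover r hr.1 hI0)
  set θ : ℝ := 1 / (4 * ((M : ℝ) + 1) ^ 2) with hθ
  have hM0 : (0:ℝ) ≤ (M : ℝ) := Nat.cast_nonneg _
  have hθ0 : 0 < θ := by rw [hθ]; positivity
  have hθ1 : θ ≤ 1 := by
    rw [hθ, div_le_one (by positivity)]
    nlinarith
  -- choose N
  obtain ⟨n₀, hn₀⟩ := Filter.eventually_atTop.1
    (log_growth r hr (θ^2/512) (by positivity))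
  have hev2 : ∀ᶠ n : ℕ in atTop, 260 / θ < Real.exp (θ^2 * n / 256) := by
    have htend : Tendsto (fun n : ℕ => θ^2 * n / 256) atTop atTop := by
      apply Tendsto.atTop_div_const (by norm_num)
      exact Tendsto.const_mul_atTop (by positivity) tendsto_natCast_atTop_atTop
    exact (Real.tendsto_exp_atTop.comp htend).eventually_gt_atTop _
  obtain ⟨n₁, hn₁⟩ := Filter.eventually_atTop.1 hev2
  set N : ℕ := max 1 (max K (max n₀ n₁)) with hN
  have hN1 : 1 ≤ N := le_max_left _ _
  have hNK : K ≤ N := le_trans (le_max_left _ _) (le_max_right _ _)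
  have hNn₀ : n₀ ≤ N := le_trans (le_trans (le_max_left _ _) (le_max_right _ _)) (le_max_right _ _)
  have hNn₁ : n₁ ≤ N := le_trans (le_trans (le_max_right _ _) (le_max_right _ _)) (le_max_right _ _)
  have hgrow : (r (K + N) : ℝ) ≤ Real.exp (θ^2/512 * ((K : ℝ) + N)) := by
    have := hn₀ (K + N) (by omega)
    push_cast at this
    exact this
  have hbig : 260 / θ < Real.exp (θ^2 * N / 256) := hn₁ N hNn₁
  set D : ℕ := r (K + N) with hD
  have hD1 : 1 ≤ D := by
    have : K + N ≤ r (K + N) := hr.1.le_apply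
    omega
  set T : ℕ := ⌈64 * (D : ℝ) / θ⌉₊ with hT
  have hDr : (1:ℝ) ≤ (D:ℝ) := by exact_mod_cast hD1
  have hTle : 64 * (D : ℝ) ≤ θ * T := by
    have h1 : 64 * (D : ℝ) / θ ≤ (T : ℝ) := Nat.le_ceil _
    calc 64 * (D : ℝ) = θ * (64 * (D : ℝ) / θ) := by field_simp
      _ ≤ θ * T := by apply mul_le_mul_of_nonneg_left h1 hθ0.le
  have hmain : (T : ℝ) * (4 * Real.exp (-θ ^ 2 * N / 128)) < 1 := by
    have h1 : (T : ℝ) < 64 * (D : ℝ) / θ + 1 := Nat.ceil_lt_add_one (by positivity)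
    have h2 : (1:ℝ) ≤ (D:ℝ)/θ := by
      rw [le_div_iff₀ hθ0]; nlinarith
    have h3 : (T : ℝ) ≤ 65 * ((D:ℝ)/θ) := by
      have : 64 * (D : ℝ) / θ = 64 * ((D:ℝ)/θ) := by ring
      linarith [this ▸ h1]
    -- D ≤ exp(θ²N/256)
    have h4 : (D : ℝ) ≤ Real.exp (θ^2 * N / 256) := by
      refine hgrow.trans (Real.exp_le_exp.2 ?_)
      have : (K:ℝ) ≤ (N:ℝ) := by exact_mod_cast hNK
      push_cast
      nlinarith [sq_nonneg θ]
    -- 260 D/θ < exp(θ²N/128)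
    have h5 : 260 * ((D:ℝ)/θ) < Real.exp (θ^2 * N / 128) := by
      have h6 : 260 * ((D:ℝ)/θ) = (260/θ) * D := by ring
      rw [h6]
      have hDpos : (0:ℝ) < (D:ℝ) := by linarith
      calc (260/θ) * (D:ℝ) < Real.exp (θ^2 * N / 256) * (D:ℝ) :=
            mul_lt_mul_of_pos_right hbig hDpos
        _ ≤ Real.exp (θ^2 * N / 256) * Real.exp (θ^2 * N / 256) :=
            mul_le_mul_of_nonneg_left h4 (Real.exp_pos _).le
        _ = Real.exp (θ^2 * N / 128) := by rw [← Real.exp_add]; ring_nf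
    set E : ℝ := Real.exp (θ^2 * N / 128) with hE
    have hexp : (0:ℝ) < E := Real.exp_pos _
    have h7 : Real.exp (-θ ^ 2 * N / 128) = E⁻¹ := by
      rw [hE, ← Real.exp_neg]
      ring_nf
    rw [h7]
    have h8 : (T:ℝ) * (4 * E⁻¹) = (4 * T) / E := by ring
    rw [h8, div_lt_one hexp]
    calc 4 * (T:ℝ) ≤ 4 * (65 * ((D:ℝ)/θ)) := by linarith
      _ = 260 * ((D:ℝ)/θ) := by ring
      _ < E := h5
  set f : Fin N → ℕ := fun j => r (K + (j : ℕ)) with hf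
  have hfD : ∀ j, f j ≤ D := fun j => hr.1.monotone (by omega)
  obtain ⟨bs, hbs⟩ := flat_exists N D T f hfD hD1 θ hθ0 hθ1 hTle hmain
  set b : ℕ → Bool := fun i => if h : K ≤ i ∧ i - K < N then bs ⟨i - K, h.2⟩ else b₀ i with hb
  have hbB : b ∈ BSet r M := by
    apply hcyl
    intro i hi
    simp only [hb]
    rw [dif_neg (by omega)]
  obtain ⟨c, α, hc, hα, happ⟩ := hbB
  have hwin : ∀ j : Fin N, b (K + (j : ℕ)) = bs j := by
    intro j
    simp only [hb]
    rw [dif_pos ⟨Nat.le_add_right _ _, by have := j.isLt; omega⟩]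
    congr 1
    apply Fin.ext
    simp
  set G : ℝ → ℂ := fun t => ∑ j, ((sg (bs j) : ℝ) : ℂ) * ec (f j) t with hG
  have hlow : (N : ℝ) / 2 ≤ (∑ j : Fin N,
      ((sg (bs j) : ℝ) : ℂ) * ∑ l, c l * ec (r (K + (j : ℕ))) (α l)).re := by
    rw [Complex.re_sum]
    have hterm : ∀ j : Fin N, 1/2 ≤ (((sg (bs j) : ℝ) : ℂ) *
        ∑ l, c l * ec (r (K + (j : ℕ))) (α l)).re := by
      intro j
      apply re_lower _ _ (sgC_cases _)
      have h9 := happ (K + (j : ℕ))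
      rw [hwin j] at h9
      exact h9
    calc (N : ℝ) / 2 = ∑ _j : Fin N, (1:ℝ)/2 := by
          rw [Finset.sum_const, Finset.card_univ, Fintype.card_fin, nsmul_eq_mul]; ring
      _ ≤ _ := Finset.sum_le_sum (fun j _ => hterm j)
  have hswap : ∑ j : Fin N, ((sg (bs j) : ℝ) : ℂ) * ∑ l, c l * ec (r (K + (j : ℕ))) (α l)
      = ∑ l, c l * G (α l) := by
    calc ∑ j : Fin N, ((sg (bs j) : ℝ) : ℂ) * ∑ l, c l * ec (r (K + (j : ℕ))) (α l)
        = ∑ j : Fin N, ∑ l, ((sg (bs j) : ℝ) : ℂ) * (c l * ec (r (K + (j : ℕ))) (α l)) :=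
          Finset.sum_congr rfl (fun j _ => by rw [Finset.mul_sum])
      _ = ∑ l, ∑ j : Fin N, ((sg (bs j) : ℝ) : ℂ) * (c l * ec (r (K + (j : ℕ))) (α l)) :=
          Finset.sum_comm
      _ = ∑ l, c l * G (α l) := by
          refine Finset.sum_congr rfl (fun l _ => ?_)
          rw [hG, Finset.mul_sum]
          refine Finset.sum_congr rfl (fun j _ => ?_)
          simp only [hf]
          ring
  have hup : (∑ l, c l * G (α l)).re ≤ (M : ℝ) * ((M : ℝ) * (θ * N / 2)) := by
    have h1 : (∑ l, c l * G (α l)).re ≤ ‖∑ l, c l * G (α l)‖ := by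
      have h2 := Complex.abs_re_le_norm (∑ l, c l * G (α l))
      exact le_trans (le_abs_self _) h2
    refine h1.trans (le_trans (norm_sum_le _ _) ?_)
    have h2 : ∀ l : Fin M, ‖c l * G (α l)‖ ≤ (M : ℝ) * (θ * N / 2) := by
      intro l
      rw [norm_mul]
      have h3 : ‖G (α l)‖ ≤ θ * N / 2 := hbs (α l) (hα l)
      exact mul_le_mul (hc l) h3 (norm_nonneg _) (Nat.cast_nonneg _)
    calc ∑ l, ‖c l * G (α l)‖ ≤ ∑ _l : Fin M, (M : ℝ) * (θ * N / 2) :=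
          Finset.sum_le_sum (fun l _ => h2 l)
      _ = (M : ℝ) * ((M : ℝ) * (θ * N / 2)) := by
          rw [Finset.sum_const, Finset.card_univ, Fintype.card_fin, nsmul_eq_mul]
  have hNr : (1 : ℝ) ≤ (N : ℝ) := by exact_mod_cast hN1
  have hθM : (M : ℝ) ^ 2 * θ ≤ 1/4 := by
    rw [hθ, mul_one_div, div_le_div_iff₀ (by positivity) (by norm_num)]
    nlinarith
  rw [hswap] at hlow
  have hfin := hlow.trans hup
  nlinarith [mul_le_mul_of_nonneg_right hθM (by positivity : (0:ℝ) ≤ (N:ℝ)/2)]
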